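/- Let M be a symmetric matrix with largest eigenvalue μ ∈ (0,1] and corresponding unit eigenvector u, all eigenvalues in [0,1], and let v be a unit vector with |⟨v,u⟩| ≥ α for some α ∈ (0,1]. Then for any integer k ≥ 0, ‖M^{k+1} v‖ / ‖M^k v‖ ≥ μ · α^{1/(k+1)}. -/

import Mathlib

open Matrix Finset

private lemma pm_adj {n : ℕ} {M : Matrix (Fin n) (Fin n) ℝ} (hsym : Mᵀ = M)
    (p : ℕ) (w x : Fin n → ℝ) :
    ((M ^ p).mulVec w) ⬝ᵥ x = w ⬝ᵥ ((M ^ p).mulVec x) := by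
  have h : (M ^ p)ᵀ = M ^ p := by rw [Matrix.transpose_pow, hsym]
  rw [Matrix.dotProduct_mulVec, ← Matrix.mulVec_transpose, h, dotProduct_comm,
    Matrix.dotProduct_mulVec, ← Matrix.mulVec_transpose, h, dotProduct_comm]

private lemma pm_eig {n : ℕ} {M : Matrix (Fin n) (Fin n) ℝ} {μ : ℝ} {u : Fin n → ℝ}
    (hu : M.mulVec u = μ • u) (p : ℕ) : (M ^ p).mulVec u = μ ^ p • u := by
  induction p with
  | zero => simp
  | succ p ih =>
      rw [pow_succ, ← Matrix.mulVec_mulVec, hu, Matrix.mulVec_smul, ih, smul_smul, pow_succ,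
        mul_comm]

/-- Power-method ratio lower bound: if `M` is symmetric PSD with eigenvalues in `[0,1]`,
largest eigenvalue `μ ∈ (0,1]` with unit eigenvector `u`, and `v` is a unit vector with
`|⟨v,u⟩| ≥ α`, then `‖M^{k+1} v‖ / ‖M^k v‖ ≥ μ · α^{1/(k+1)}`. -/
theorem powerMethod_ratio_ge {n : ℕ} (M : Matrix (Fin n) (Fin n) ℝ)
    (hM : M.PosSemidef) (h_le_one : ∀ i, hM.1.eigenvalues i ≤ 1)
    (μ : ℝ) (hμ_pos : 0 < μ) (hμ_le : μ ≤ 1)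
    (u : Fin n → ℝ) (hu_unit : ∑ ℓ, (u ℓ) ^ 2 = 1)
    (hu_eig : M.mulVec u = μ • u)
    (h_top : ∀ i, hM.1.eigenvalues i ≤ μ)
    (v : Fin n → ℝ) (hv_unit : ∑ ℓ, (v ℓ) ^ 2 = 1)
    (α : ℝ) (hα_pos : 0 < α) (hα_le : α ≤ 1)
    (h_overlap : α ≤ |∑ ℓ, v ℓ * u ℓ|)
    (k : ℕ) :
    Real.sqrt (∑ i, ((M ^ (k + 1)).mulVec v i) ^ 2) /
      Real.sqrt (∑ i, ((M ^ k).mulVec v i) ^ 2) ≥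
      μ * α ^ ((1 : ℝ) / (k + 1)) := by
  have hsym : Mᵀ = M := by
    have := hM.1
    simpa [Matrix.IsHermitian, Matrix.conjTranspose_eq_transpose_of_trivial] using this
  set f : ℕ → ℝ := fun j => ∑ i, ((M ^ j).mulVec v i) ^ 2 with hf
  set a : ℕ → ℝ := fun j => Real.sqrt (f j) with ha
  have hf_nonneg : ∀ j, 0 ≤ f j := fun j => Finset.sum_nonneg fun i _ => sq_nonneg _
  have ha_nonneg : ∀ j, 0 ≤ a j := fun j => Real.sqrt_nonneg _
  -- lower bound: μ ^ j * α ≤ a j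
  have h_lb : ∀ j, μ ^ j * α ≤ a j := by
    intro j
    have hdot : ((M ^ j).mulVec v) ⬝ᵥ u = μ ^ j * (v ⬝ᵥ u) := by
      rw [pm_adj hsym, pm_eig hu_eig, dotProduct_smul, smul_eq_mul]
    have hcs : (((M ^ j).mulVec v) ⬝ᵥ u) ^ 2 ≤ f j := by
      have := Finset.sum_mul_sq_le_sq_mul_sq Finset.univ ((M ^ j).mulVec v) u
      simpa [dotProduct, hu_unit] using this
    have habs : |((M ^ j).mulVec v) ⬝ᵥ u| ≤ a j := by
      rw [← Real.sqrt_sq_eq_abs]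
      exact Real.sqrt_le_sqrt hcs
    calc μ ^ j * α ≤ μ ^ j * |v ⬝ᵥ u| := by
          refine mul_le_mul_of_nonneg_left ?_ (by positivity)
          simpa [dotProduct] using h_overlap
      _ = |((M ^ j).mulVec v) ⬝ᵥ u| := by
          rw [hdot, abs_mul, abs_of_pos (by positivity : (0:ℝ) < μ ^ j)]
      _ ≤ a j := habs
  have ha_pos : ∀ j, 0 < a j := fun j =>
    lt_of_lt_of_le (by positivity) (h_lb j)
  -- chain inequality : f (j+1) ≤ a (j+2) * a j
  have h_chain : ∀ j, a (j + 1) ^ 2 ≤ a (j + 2) * a j := by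
    intro j
    have hsq : ∀ p q, ((M ^ p).mulVec v) ⬝ᵥ ((M ^ q).mulVec v)
        = v ⬝ᵥ ((M ^ (p + q)).mulVec v) := by
      intro p q
      rw [pm_adj hsym, Matrix.mulVec_mulVec, ← pow_add]
    have h1 : f (j + 1) = ((M ^ (j + 2)).mulVec v) ⬝ᵥ ((M ^ j).mulVec v) := by
      have e1 : f (j + 1) = ((M ^ (j+1)).mulVec v) ⬝ᵥ ((M ^ (j+1)).mulVec v) := by
        simp [hf, dotProduct, sq]
      rw [e1, hsq, hsq]
      ring_nf
    have hcs : (f (j + 1)) ^ 2 ≤ f (j + 2) * f j := by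
      rw [h1]
      have := Finset.sum_mul_sq_le_sq_mul_sq Finset.univ
        ((M ^ (j + 2)).mulVec v) ((M ^ j).mulVec v)
      simpa [dotProduct] using this
    have : f (j + 1) ≤ a (j + 2) * a j := by
      have := Real.sqrt_le_sqrt hcs
      rwa [Real.sqrt_sq (hf_nonneg _), Real.sqrt_mul (hf_nonneg _)] at this
    calc a (j + 1) ^ 2 = f (j + 1) := Real.sq_sqrt (hf_nonneg _)
      _ ≤ a (j + 2) * a j := this
  -- induction: a k ^ (k+1) ≤ a (k+1) ^ k
  have h_key : ∀ j, a j ^ (j + 1) ≤ a (j + 1) ^ j := by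
    intro j
    induction j with
    | zero => simp [ha, hf, hv_unit]
    | succ j ih =>
        have h1 : a (j + 1) ^ (2 * (j + 1)) ≤ a (j + 2) ^ (j + 1) * a (j + 1) ^ j := by
          calc a (j + 1) ^ (2 * (j + 1)) = (a (j + 1) ^ 2) ^ (j + 1) := by
                rw [← pow_mul]
            _ ≤ (a (j + 2) * a j) ^ (j + 1) :=
                pow_le_pow_left₀ (sq_nonneg _) (h_chain j) _
            _ = a (j + 2) ^ (j + 1) * a j ^ (j + 1) := mul_pow _ _ _
            _ ≤ a (j + 2) ^ (j + 1) * a (j + 1) ^ j :=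
                mul_le_mul_of_nonneg_left ih (by positivity)
        have h2 : a (j + 1) ^ (j + 2) * a (j + 1) ^ j ≤
            a (j + 2) ^ (j + 1) * a (j + 1) ^ j := by
          calc a (j + 1) ^ (j + 2) * a (j + 1) ^ j = a (j + 1) ^ (2 * (j + 1)) := by
                rw [← pow_add]; ring_nf
            _ ≤ a (j + 2) ^ (j + 1) * a (j + 1) ^ j := h1
        exact le_of_mul_le_mul_right h2 (pow_pos (ha_pos _) _)
  -- finish
  set c : ℝ := α ^ ((1 : ℝ) / (k + 1)) with hc
  have hc_pos : 0 < c := Real.rpow_pos_of_pos hα_pos _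
  have hc_pow : c ^ (k + 1) = α := by
    rw [hc, ← Real.rpow_natCast (α ^ ((1:ℝ)/(k+1))) (k+1), ← Real.rpow_mul hα_pos.le]
    have he : (1 : ℝ) / (↑k + 1) * ((k + 1 : ℕ) : ℝ) = 1 := by
      push_cast
      field_simp
    rw [he, Real.rpow_one]
  have hB := ha_pos (k + 1)
  have hA := ha_pos k
  rw [ge_iff_le, ← pow_le_pow_iff_left₀ (mul_nonneg hμ_pos.le hc_pos.le)
    (by positivity : (0:ℝ) ≤ a (k+1) / a k) (Nat.succ_ne_zero k)]
  calc (μ * c) ^ (k + 1) = μ ^ (k + 1) * α := by rw [mul_pow, hc_pow]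
    _ ≤ a (k + 1) := h_lb (k + 1)
    _ = a (k + 1) ^ (k + 1) / a (k + 1) ^ k := by
        rw [eq_div_iff (pow_pos (ha_pos _) _).ne', pow_succ, mul_comm]
    _ ≤ a (k + 1) ^ (k + 1) / a k ^ (k + 1) := by
        apply div_le_div_of_nonneg_left (by positivity) (pow_pos (ha_pos _) _) (h_key k)
    _ = (a (k + 1) / a k) ^ (k + 1) := (div_pow _ _ _).symm
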